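/- Let A be a valid MAPF solution and assume that for every wait action w ∈ A there exists an action m ∈ A with m.R = w.R, m.t > w.t and m.s ≠ m.g (no agent ends its plan with a wait action). Let the full ADG be the directed graph on A whose edges are all type1 and all type2 dependencies, and let the reduced ADG be the directed graph on A whose edges are all type1 dependencies together with exactly those type2 dependencies a → b for which neither a nor b is a wait action. Then for all actions a, b ∈ A, b is reachable from a in the full ADG if and only if b is reachable from a in the reduced ADG; i.e., type2 dependencies incident to wait actions are redundant. -/

import Mathlib

/-- An action is a 4-tuple of a start vertex `s`, goal vertex `g`,
time step `t` and agent `R`. -/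
structure MAPFAction (V Agent : Type) where
  s : V
  g : V
  t : ℕ
  R : Agent

/-- A set of actions is a valid MAPF solution if
(i) distinct simultaneous actions have distinct starts and distinct goals,
(ii) distinct actions of the same agent have distinct time steps, and
(iii) every action with positive time step has a previous action. -/
def ValidSolution {V Agent : Type} (A : Set (MAPFAction V Agent)) : Prop :=
  (∀ a ∈ A, ∀ b ∈ A, a ≠ b → a.t = b.t → a.s ≠ b.s ∧ a.g ≠ b.g) ∧
  (∀ a ∈ A, ∀ b ∈ A, a ≠ b → a.R = b.R → a.t ≠ b.t) ∧
  (∀ b ∈ A, 0 < b.t → ∃ a ∈ A, a.R = b.R ∧ a.g = b.s ∧ a.t = b.t - 1)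

/-- Type1 dependency `a → b`: same agent, `b` is the next time step. -/
def Type1Dep {V Agent : Type} (a b : MAPFAction V Agent) : Prop :=
  a.R = b.R ∧ b.t = a.t + 1

/-- Type2 dependency `a → b`: different agents, `a` starts where `b` ends,
and `a` occurs no later than `b`. -/
def Type2Dep {V Agent : Type} (a b : MAPFAction V Agent) : Prop :=
  a.R ≠ b.R ∧ a.s = b.g ∧ a.t ≤ b.t

/-- Edge relation of the full ADG on `A`: all type1 and all type2 dependencies. -/
def FullADGEdge {V Agent : Type} (A : Set (MAPFAction V Agent))
    (x y : MAPFAction V Agent) : Prop :=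
  x ∈ A ∧ y ∈ A ∧ (Type1Dep x y ∨ Type2Dep x y)

/-- Edge relation of the reduced ADG on `A`: all type1 dependencies, plus those
type2 dependencies whose endpoints are both not wait actions. -/
def ReducedADGEdge {V Agent : Type} (A : Set (MAPFAction V Agent))
    (x y : MAPFAction V Agent) : Prop :=
  x ∈ A ∧ y ∈ A ∧ (Type1Dep x y ∨ (Type2Dep x y ∧ x.s ≠ x.g ∧ y.s ≠ y.g))

section Aux

variable {V Agent : Type} {A : Set (MAPFAction V Agent)}

lemma at_unique (hA : ValidSolution A) {c c' : MAPFAction V Agent}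
    (hc : c ∈ A) (hc' : c' ∈ A) (hR : c.R = c'.R) (ht : c.t = c'.t) : c = c' := by
  by_contra h
  exact hA.2.1 c hc c' hc' h hR ht

lemma exists_at (hA : ValidSolution A) {m : MAPFAction V Agent} (hm : m ∈ A) :
    ∀ j, j ≤ m.t → ∃ c ∈ A, c.R = m.R ∧ c.t = m.t - j := by
  intro j
  induction j with
  | zero => exact fun _ => ⟨m, hm, rfl, rfl⟩
  | succ j ih =>
    intro hj
    obtain ⟨c, hc, hcR, hct⟩ := ih (by omega)
    obtain ⟨p, hp, hpR, _, hpt⟩ := hA.2.2 c hc (by omega)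
    exact ⟨p, hp, hpR.trans hcR, by omega⟩

lemma same_agent_path (hA : ValidSolution A) :
    ∀ k : ℕ, ∀ x ∈ A, ∀ y ∈ A, x.R = y.R → y.t = x.t + k →
      Relation.ReflTransGen (ReducedADGEdge A) x y := by
  intro k
  induction k with
  | zero =>
    intro x hx y hy hR ht
    have : x = y := at_unique hA hx hy hR (by omega)
    exact this ▸ Relation.ReflTransGen.refl
  | succ k ih =>
    intro x hx y hy hR ht
    obtain ⟨p, hp, hpR, hpg, hpt⟩ := hA.2.2 y hy (by omega)
    have hx_p : Relation.ReflTransGen (ReducedADGEdge A) x p :=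
      ih x hx p hp (hR.trans hpR.symm) (by omega)
    exact hx_p.tail ⟨hp, hy, Or.inl ⟨hpR, by omega⟩⟩

lemma forward_waits (hA : ValidSolution A) {a : MAPFAction V Agent}
    (ha : a ∈ A) (haw : a.s = a.g) :
    ∀ k, ∀ c ∈ A, c.R = a.R → c.t = a.t + k →
      (c.s = a.s ∧ c.g = a.s) ∨
      (∃ n ∈ A, n.R = a.R ∧ a.t < n.t ∧ n.t ≤ a.t + k ∧ n.s = a.s ∧ n.s ≠ n.g) := by
  intro k
  induction k with
  | zero =>
    intro c hc hR ht
    have : c = a := at_unique hA hc ha hR (by omega)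
    subst this
    exact Or.inl ⟨rfl, haw.symm⟩
  | succ k ih =>
    intro c hc hR ht
    obtain ⟨p, hp, hpR, hpg, hpt⟩ := hA.2.2 c hc (by omega)
    rcases ih p hp (hpR.trans hR) (by omega) with ⟨hps, hpgs⟩ | ⟨n, hn, hnR, h1, h2, h3, h4⟩
    · have hcs : c.s = a.s := hpg ▸ hpgs
      by_cases hw : c.s = c.g
      · exact Or.inl ⟨hcs, hw ▸ hcs⟩
      · exact Or.inr ⟨c, hc, hR, by omega, by omega, hcs, hw⟩
    · exact Or.inr ⟨n, hn, hnR, h1, by omega, h3, h4⟩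

lemma backward_waits (hA : ValidSolution A) {b : MAPFAction V Agent}
    (hb : b ∈ A) (hbw : b.s = b.g) :
    ∀ k, k ≤ b.t →
      (∃ c ∈ A, c.R = b.R ∧ b.t - k ≤ c.t ∧ c.t ≤ b.t ∧ c.g = b.g ∧ c.s ≠ c.g) ∨
      (∃ c ∈ A, c.R = b.R ∧ c.t = b.t - k ∧ c.s = b.g ∧ c.g = b.g) := by
  intro k
  induction k with
  | zero => exact fun _ => Or.inr ⟨b, hb, rfl, rfl, hbw, rfl⟩
  | succ k ih =>
    intro hk
    rcases ih (by omega) with ⟨c, hc, h1, h2, h3, h4, h5⟩ | ⟨c, hc, hcR, hct, hcs, hcg⟩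
    · exact Or.inl ⟨c, hc, h1, by omega, h3, h4, h5⟩
    · obtain ⟨p, hp, hpR, hpg, hpt⟩ := hA.2.2 c hc (by omega)
      have hpgb : p.g = b.g := hpg.trans hcs
      by_cases hw : p.s = p.g
      · exact Or.inr ⟨p, hp, hpR.trans hcR, by omega, hw.trans hpgb, hpgb⟩
      · exact Or.inl ⟨p, hp, hpR.trans hcR, by omega, by omega, hpgb, hw⟩

lemma type2_path (hA : ValidSolution A)
    (hNoEndWait : ∀ w ∈ A, w.s = w.g →
      ∃ m ∈ A, m.R = w.R ∧ w.t < m.t ∧ m.s ≠ m.g)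
    {a b : MAPFAction V Agent} (ha : a ∈ A) (hb : b ∈ A)
    (h2 : Type2Dep a b) : Relation.TransGen (ReducedADGEdge A) a b := by
  obtain ⟨hR, hsg, ht⟩ := h2
  obtain ⟨n, hn, hnR, hnt1, hnt2, hns, hnw⟩ :
      ∃ n ∈ A, n.R = a.R ∧ a.t ≤ n.t ∧ n.t ≤ b.t ∧ n.s = a.s ∧ n.s ≠ n.g := by
    by_cases haw : a.s = a.g
    · obtain ⟨m, hm, hmR, hmt, hmw⟩ := hNoEndWait a ha haw
      by_cases hmb : m.t ≤ b.t
      · rcases forward_waits hA ha haw (m.t - a.t) m hm hmR (by omega) with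
          ⟨h1, h2'⟩ | ⟨n, hn, hnR, h1, h2', h3, h4⟩
        · exact absurd (h1.trans h2'.symm) hmw
        · exact ⟨n, hn, hnR, by omega, by omega, h3, h4⟩
      · obtain ⟨c, hc, hcR, hct⟩ := exists_at hA hm (m.t - b.t) (by omega)
        rcases forward_waits hA ha haw (b.t - a.t) c hc (hcR.trans hmR) (by omega) with
          ⟨hcs, hcg⟩ | ⟨n, hn, hnR, h1, h2', h3, h4⟩
        · have hne : c ≠ b := by
            intro h
            exact hR ((h ▸ (hcR.trans hmR)).symm)
          exact absurd (hcg.trans hsg) (hA.1 c hc b hb hne (by omega)).2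
        · exact ⟨n, hn, hnR, by omega, by omega, h3, h4⟩
    · exact ⟨a, ha, rfl, le_refl _, ht, rfl, haw⟩
  obtain ⟨c, hc, hcR, hct1, hct2, hcg, hcw⟩ :
      ∃ c ∈ A, c.R = b.R ∧ n.t ≤ c.t ∧ c.t ≤ b.t ∧ c.g = b.g ∧ c.s ≠ c.g := by
    by_cases hbw : b.s = b.g
    · rcases backward_waits hA hb hbw (b.t - n.t) (by omega) with
        ⟨c, hc, hcR', h1, h2', h3, h4⟩ | ⟨c, hc, hcR', hct', hcs', hcg'⟩
      · exact ⟨c, hc, hcR', by omega, h2', h3, h4⟩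
      · have hne : c ≠ n := by
          intro h
          exact hR (hnR.symm.trans (h ▸ hcR'))
        exact absurd (hcs'.trans (hsg.symm.trans hns.symm)) (hA.1 c hc n hn hne (by omega)).1
    · exact ⟨b, hb, rfl, hnt2, le_refl _, rfl, hbw⟩
  have p1 : Relation.ReflTransGen (ReducedADGEdge A) a n :=
    same_agent_path hA (n.t - a.t) a ha n hn hnR.symm (by omega)
  have e : ReducedADGEdge A n c :=
    ⟨hn, hc, Or.inr ⟨⟨by rw [hnR, hcR]; exact hR, (hns.trans hsg).trans hcg.symm, hct1⟩, hnw, hcw⟩⟩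
  have p2 : Relation.ReflTransGen (ReducedADGEdge A) c b :=
    same_agent_path hA (b.t - c.t) c hc b hb hcR (by omega)
  exact Relation.TransGen.trans_left (Relation.TransGen.tail' p1 e) p2

lemma full_edge_path (hA : ValidSolution A)
    (hNoEndWait : ∀ w ∈ A, w.s = w.g →
      ∃ m ∈ A, m.R = w.R ∧ w.t < m.t ∧ m.s ≠ m.g)
    {x y : MAPFAction V Agent} (e : FullADGEdge A x y) :
    Relation.TransGen (ReducedADGEdge A) x y := by
  obtain ⟨hx, hy, h1 | h2⟩ := e
  · exact Relation.TransGen.single ⟨hx, hy, Or.inl h1⟩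
  · exact type2_path hA hNoEndWait hx hy h2

end Aux

/-- if no agent ends its plan with a wait action, then the full ADG and
the reduced ADG (which drops type2 dependencies incident to wait actions) have the
same reachability relation: type2 dependencies incident to wait actions are redundant. -/
theorem wait_actions_redundant_in_ADG {V Agent : Type}
    (A : Set (MAPFAction V Agent)) (hA : ValidSolution A)
    (hNoEndWait : ∀ w ∈ A, w.s = w.g →
      ∃ m ∈ A, m.R = w.R ∧ w.t < m.t ∧ m.s ≠ m.g) :
    ∀ a ∈ A, ∀ b ∈ A,
      (Relation.TransGen (FullADGEdge A) a b ↔ Relation.TransGen (ReducedADGEdge A) a b) := by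
  intro a ha b hb
  constructor
  · intro h
    induction h with
    | single e => exact full_edge_path hA hNoEndWait e
    | tail _ e ih => exact (ih e.1).trans (full_edge_path hA hNoEndWait e)
  · intro h
    exact Relation.TransGen.mono (fun x y ⟨hx, hy, h'⟩ => ⟨hx, hy, h'.imp id And.left⟩) _ _ h
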